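/- Let F : ℝ≥0ⁿ → ℝ be continuously twice differentiable and one-sided σ-smooth, i.e. for all x ≥ 0 with x ≠ 0 and all u ≥ 0, uᵀ∇²F(x)u ≤ σ·(2‖u‖₁/‖x‖₁)·uᵀ∇F(x). Then for all x ∈ [0,1]ⁿ \ {0}, u ∈ [0,1]ⁿ and ε > 0 such that x + εu ∈ [0,1]ⁿ, we have uᵀ∇F(x + εu) ≤ (‖x + εu‖₁/‖x‖₁)^{2σ} · uᵀ∇F(x). -/

import Mathlib

open Finset

/-- For a C² one-sided σ-smooth function `F` on `ℝⁿ`,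
for `x ∈ [0,1]ⁿ \ {0}`, `u ∈ [0,1]ⁿ`, `ε > 0` with `x + εu ∈ [0,1]ⁿ`, we have
`uᵀ∇F(x + εu) ≤ (‖x+εu‖₁/‖x‖₁)^{2σ} · uᵀ∇F(x)`. -/
theorem oss_gradient_growth
    (n : ℕ) (F : (Fin n → ℝ) → ℝ) (σ : ℝ) (hσ : 0 ≤ σ)
    (hF : ContDiff ℝ 2 F)
    (hOSS : ∀ x u : Fin n → ℝ, (∀ i, 0 ≤ x i) → x ≠ 0 → (∀ i, 0 ≤ u i) →
      fderiv ℝ (fun y => fderiv ℝ F y u) x u ≤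
        σ * (2 * (∑ i, |u i|) / (∑ i, |x i|)) * fderiv ℝ F x u)
    (x u : Fin n → ℝ)
    (hx : ∀ i, 0 ≤ x i ∧ x i ≤ 1) (hx0 : x ≠ 0)
    (hu : ∀ i, 0 ≤ u i ∧ u i ≤ 1)
    (ε : ℝ) (hε : 0 < ε)
    (hxu : ∀ i, 0 ≤ x i + ε * u i ∧ x i + ε * u i ≤ 1) :
    fderiv ℝ F (x + ε • u) u ≤
      ((∑ i, |x i + ε * u i|) / (∑ i, |x i|)) ^ (2 * σ) * fderiv ℝ F x u := by
  have hxnn : ∀ i, 0 ≤ x i := fun i => (hx i).1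
  have hunn : ∀ i, 0 ≤ u i := fun i => (hu i).1
  set a : ℝ := ∑ i, x i with ha_def
  set b : ℝ := ∑ i, u i with hb_def
  have hb0 : 0 ≤ b := Finset.sum_nonneg fun i _ => hunn i
  have ha0 : 0 < a := by
    apply Finset.sum_pos' (fun i _ => hxnn i)
    obtain ⟨i, hi⟩ := Function.ne_iff.mp hx0
    exact ⟨i, Finset.mem_univ i, lt_of_le_of_ne (hxnn i) (Ne.symm hi)⟩
  have habsx : (∑ i, |x i|) = a :=
    Finset.sum_congr rfl fun i _ => abs_of_nonneg (hxnn i)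
  have habsu : (∑ i, |u i|) = b :=
    Finset.sum_congr rfl fun i _ => abs_of_nonneg (hunn i)
  have habsxu : (∑ i, |x i + ε * u i|) = a + ε * b := by
    rw [ha_def, hb_def, Finset.mul_sum, ← Finset.sum_add_distrib]
    exact Finset.sum_congr rfl fun i _ => abs_of_nonneg (hxu i).1
  set p : ℝ := 2 * σ with hp_def
  have hp0 : 0 ≤ p := by positivity
  set F' : (Fin n → ℝ) → ℝ := fun y => fderiv ℝ F y u with hF'def
  have hF'cd : ContDiff ℝ 1 F' :=
    (hF.fderiv_right (by norm_num)).clm_apply contDiff_const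
  have hF'diff : Differentiable ℝ F' := hF'cd.differentiable one_ne_zero
  -- derivative of H t = (a + t*b)^(-p) * F' (x + t•u)
  have Hd : ∀ t ∈ Set.Icc (0:ℝ) ε,
      HasDerivAt (fun t : ℝ => (a + t*b) ^ (-p) * F' (x + t • u))
        (b * (-p) * (a + t*b) ^ (-p - 1) * F' (x + t • u)
          + (a + t*b) ^ (-p) * fderiv ℝ F' (x + t • u) u) t := by
    intro t ht
    have hst : 0 < a + t * b := by nlinarith [mul_nonneg ht.1 hb0]
    have h1 : HasDerivAt (fun t : ℝ => a + t * b) b t := by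
      simpa using ((hasDerivAt_id t).mul_const b).const_add a
    have h2 : HasDerivAt (fun t : ℝ => (a + t*b) ^ (-p)) (b * (-p) * (a + t*b) ^ (-p - 1)) t :=
      h1.rpow_const (Or.inl hst.ne')
    have h3 : HasDerivAt (fun t : ℝ => x + t • u) u t := by
      simpa using ((hasDerivAt_id t).smul_const u).const_add x
    have h4 : HasDerivAt (fun t : ℝ => F' (x + t • u)) (fderiv ℝ F' (x + t • u) u) t :=
      (hF'diff _).hasFDerivAt.comp_hasDerivAt t h3
    exact h2.mul h4
  have Hanti : AntitoneOn (fun t : ℝ => (a + t*b) ^ (-p) * F' (x + t • u)) (Set.Icc 0 ε) := by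
    apply antitoneOn_of_deriv_nonpos (convex_Icc 0 ε)
    · exact fun t ht => (Hd t ht).continuousAt.continuousWithinAt
    · intro t ht
      rw [interior_Icc] at ht
      exact (Hd t ⟨ht.1.le, ht.2.le⟩).differentiableAt.differentiableWithinAt
    · intro t ht
      rw [interior_Icc] at ht
      rw [(Hd t ⟨ht.1.le, ht.2.le⟩).deriv]
      have ht0 : (0:ℝ) ≤ t := ht.1.le
      have hst : 0 < a + t * b := by nlinarith [mul_nonneg ht0 hb0]
      have hct : ∀ i, 0 ≤ (x + t • u) i := fun i => by
        simp only [Pi.add_apply, Pi.smul_apply, smul_eq_mul]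
        exact add_nonneg (hxnn i) (mul_nonneg ht0 (hunn i))
      have hsum : (∑ i, |(x + t • u) i|) = a + t * b := by
        simp only [Pi.add_apply, Pi.smul_apply, smul_eq_mul]
        rw [ha_def, hb_def, Finset.mul_sum, ← Finset.sum_add_distrib]
        exact Finset.sum_congr rfl fun i _ =>
          abs_of_nonneg (add_nonneg (hxnn i) (mul_nonneg ht0 (hunn i)))
      have hctne : (x + t • u) ≠ 0 := by
        intro h
        rw [h] at hsum
        simp at hsum
        nlinarith
      have hO := hOSS (x + t • u) u hct hctne hunn
      rw [habsu, hsum] at hO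
      have hO' : fderiv ℝ F' (x + t • u) u ≤
          σ * (2 * b / (a + t * b)) * F' (x + t • u) := hO
      have hA : (0:ℝ) < (a + t*b) ^ (-p) := Real.rpow_pos_of_pos hst _
      have e1 : (a + t*b) ^ (-p - 1) = (a + t*b) ^ (-p) / (a + t*b) := by
        rw [Real.rpow_sub hst, Real.rpow_one]
      rw [e1]
      have step : (a + t*b) ^ (-p) * fderiv ℝ F' (x + t • u) u ≤
          (a + t*b) ^ (-p) * (σ * (2 * b / (a + t * b)) * F' (x + t • u)) :=
        mul_le_mul_of_nonneg_left hO' hA.le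
      have zero_eq : b * (-p) * ((a + t*b) ^ (-p) / (a + t*b)) * F' (x + t • u)
          + (a + t*b) ^ (-p) * (σ * (2 * b / (a + t * b)) * F' (x + t • u)) = 0 := by
        rw [hp_def]
        field_simp
        ring
      linarith
  have key := Hanti (Set.left_mem_Icc.mpr hε.le) (Set.right_mem_Icc.mpr hε.le) hε.le
  simp only [zero_mul, add_zero, zero_smul, add_zero] at key
  -- key : (a + ε*b)^(-p) * F' (x + ε•u) ≤ a^(-p) * F' x
  rw [habsxu, habsx]
  have hsb : 0 < a + ε * b := by nlinarith
  have hfin : ((a + ε * b) / a) ^ p = (a + ε * b) ^ p * a ^ (-p) := by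
    rw [Real.div_rpow hsb.le ha0.le, Real.rpow_neg ha0.le, div_eq_mul_inv]
  have hPpos : (0:ℝ) < (a + ε * b) ^ p := Real.rpow_pos_of_pos hsb _
  calc fderiv ℝ F (x + ε • u) u
      = (a + ε*b) ^ p * ((a + ε*b) ^ (-p) * F' (x + ε • u)) := by
        rw [← mul_assoc, ← Real.rpow_add hsb]
        simp [hF'def]
    _ ≤ (a + ε*b) ^ p * (a ^ (-p) * F' x) := mul_le_mul_of_nonneg_left key hPpos.le
    _ = ((a + ε * b) / a) ^ p * fderiv ℝ F x u := by rw [hfin, hF'def]; ring
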